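/- Let (1+√33)/4 < α < 2, w ∈ ℝ, λ = λ₁ + iλ₂ with λ₂ > 0, and C₃ > 0. Let v : [1,∞) → ℂ satisfy the model ODE with remainder r, where |r(t)| ≤ C₃ t^{−5/4+α/2} for all t ≥ 1. Then limsup_{t→∞} t^{1/α − 1/2} |v(t)| ≤ ( (2−α)/(2α λ₂) )^{1/α}. -/

import Mathlib

open Real Set Filter

noncomputable section

/-- `v` satisfies the model ODE
`v′(t) = i (w v(t) + λ t^{−α/2} |v(t)|^α v(t) + t^{−α/2} r(t))`
with continuous remainder `r` on the set `I ⊆ [1,∞)`. -/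
def SatisfiesModelODE (α w : ℝ) (lam : ℂ) (v r : ℝ → ℂ) (I : Set ℝ) : Prop :=
  ContinuousOn r I ∧
  ∀ t ∈ I, HasDerivWithinAt v
    (Complex.I * ((w : ℂ) * v t
      + lam * ((t ^ (-α / 2) : ℝ) : ℂ) * ((‖v t‖ ^ α : ℝ) : ℂ) * v t
      + ((t ^ (-α / 2) : ℝ) : ℂ) * r t)) I t

set_option maxHeartbeats 2000000 in
/-- For `(1+√33)/4 < α < 2` and `lam2 > 0`, solutions of the model ODE
with remainder `|r(t)| ≤ C₃ t^{−5/4+α/2}` satisfy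
`limsup_{t→∞} t^{1/α−1/2} |v(t)| ≤ ((2−α)/(2αlam2))^{1/α}`. -/
theorem model_ODE_limsup (α w : ℝ)
    (hα1 : (1 + Real.sqrt 33) / 4 < α) (hα2 : α < 2)
    (lam : ℂ) (hlam : 0 < lam.im)
    (C₃ : ℝ) (hC₃ : 0 < C₃) (v r : ℝ → ℂ)
    (hode : SatisfiesModelODE α w lam v r (Ici 1))
    (hr : ∀ t : ℝ, 1 ≤ t → ‖r t‖ ≤ C₃ * t ^ (-(5:ℝ)/4 + α/2)) :
    ∀ ε : ℝ, 0 < ε → ∀ᶠ t : ℝ in atTop,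
      t ^ (1/α - 1/2) * ‖v t‖ ≤ ((2 - α) / (2 * α * lam.im)) ^ (1/α) + ε := by
  intro ε hε
  obtain ⟨hrcont, hodev⟩ := hode
  -- basic facts about α
  have h5 : (5:ℝ) < Real.sqrt 33 := (Real.lt_sqrt (by norm_num)).2 (by norm_num)
  have hα32 : (3:ℝ)/2 < α := by nlinarith
  have hα0 : (0:ℝ) < α := by linarith
  have hαne : α ≠ 0 := ne_of_gt hα0
  have hδ : 1/α - 3/4 < 0 := by
    have h1 : 1/α < 2/3 := by rw [div_lt_iff₀ hα0]; linarith
    linarith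
  set lam2 := lam.im with hlam2def
  clear_value lam2
  set β := 2/α - 1 with hβdef
  clear_value β
  have hβ0 : 0 < β := by
    have : 1 < 2/α := (one_lt_div hα0).2 hα2
    rw [hβdef]; linarith
  set base := (2 - α) / (2 * α * lam2) with hbasedef
  clear_value base
  have hbase : 0 < base := by
    rw [hbasedef]
    exact div_pos (by linarith) (by positivity)
  set K := base ^ (1/α) with hKdef
  clear_value K
  have hK0 : 0 < K := by
    rw [hKdef]
    exact Real.rpow_pos_of_pos hbase _
  have hKa : K ^ α = base := by
    rw [hKdef, ← Real.rpow_mul hbase.le, one_div_mul_cancel hαne, Real.rpow_one]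
  set M := K + ε/2 with hMdef
  clear_value M
  have hMK : K < M := by rw [hMdef]; linarith
  have hM0 : 0 < M := lt_trans hK0 hMK
  set c := 2*lam2*M^α - β with hcdef
  clear_value c
  have hbl : 2*lam2*K^α = β := by
    rw [hKa, hbasedef, hβdef]
    field_simp
  have hc0 : 0 < c := by
    have h1 : K^α < M^α := Real.rpow_lt_rpow hK0.le hMK hα0
    rw [hcdef]; nlinarith
  -- the derivative of v
  set V' : ℝ → ℂ := fun t => Complex.I * ((w : ℂ) * v t
      + lam * ((t ^ (-α / 2) : ℝ) : ℂ) * ((‖v t‖ ^ α : ℝ) : ℂ) * v t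
      + ((t ^ (-α / 2) : ℝ) : ℂ) * r t) with hV'def
  clear_value V'
  have hv : ∀ t ∈ Ici (1:ℝ), HasDerivWithinAt v (V' t) (Ici 1) t := by
    intro t ht
    rw [hV'def]
    exact hodev t ht
  -- derivative of ‖v‖²
  set E : ℝ → ℝ := fun t =>
    -2*lam2*(t ^ (-α / 2))*(‖v t‖^α)*‖v t‖^2 - 2*(t ^ (-α / 2))*((starRingEnd ℂ) (v t) * r t).im
    with hEdef
  clear_value E
  have hinner : ∀ t : ℝ, 2 * (inner ℝ (v t) (V' t) : ℝ) = E t := by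
    intro t
    rw [Complex.inner]
    simp only [hV'def, hEdef]
    have hz : ‖v t‖^2 = (v t).re * (v t).re + (v t).im * (v t).im := by
      rw [Complex.sq_norm, Complex.normSq_apply]
    rw [hz, hlam2def]
    simp only [Complex.mul_re, Complex.mul_im, Complex.add_re, Complex.add_im,
      Complex.I_re, Complex.I_im, Complex.ofReal_re, Complex.ofReal_im,
      Complex.conj_re, Complex.conj_im]
    ring
  have hyderiv : ∀ t ∈ Ici (1:ℝ), HasDerivWithinAt (fun t => ‖v t‖^2) (E t) (Ici 1) t := by
    intro t ht
    have h1 := (hv t ht).norm_sq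
    rw [hinner t] at h1
    exact h1
  -- the bound on E
  have hEbound : ∀ x : ℝ, 1 ≤ x →
      E x ≤ -2*lam2*(x ^ (-α / 2))*(‖v x‖^α)*‖v x‖^2 + 2*C₃*‖v x‖*x^(-(5:ℝ)/4) := by
    intro x hx
    have hx0 : (0:ℝ) < x := lt_of_lt_of_le one_pos hx
    have hs0 : (0:ℝ) ≤ x ^ (-α / 2) := Real.rpow_nonneg hx0.le _
    have h1 : -((starRingEnd ℂ) (v x) * r x).im ≤ ‖v x‖ * ‖r x‖ := by
      have h2 := Complex.abs_im_le_norm ((starRingEnd ℂ) (v x) * r x)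
      have h3 : ‖(starRingEnd ℂ) (v x) * r x‖ = ‖v x‖ * ‖r x‖ := by
        rw [norm_mul, Complex.norm_conj]
      rw [h3] at h2
      have := neg_abs_le (((starRingEnd ℂ) (v x) * r x).im)
      linarith [abs_nonneg (((starRingEnd ℂ) (v x) * r x).im)]
    have h4 : ‖r x‖ ≤ C₃ * x ^ (-(5:ℝ)/4 + α/2) := hr x hx
    have h5 : -((starRingEnd ℂ) (v x) * r x).im ≤ ‖v x‖ * (C₃ * x ^ (-(5:ℝ)/4 + α/2)) := by
      calc -((starRingEnd ℂ) (v x) * r x).im ≤ ‖v x‖ * ‖r x‖ := h1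
        _ ≤ ‖v x‖ * (C₃ * x ^ (-(5:ℝ)/4 + α/2)) :=
            mul_le_mul_of_nonneg_left h4 (norm_nonneg _)
    have h6 : (x ^ (-α / 2)) * x ^ (-(5:ℝ)/4 + α/2) = x ^ (-(5:ℝ)/4) := by
      rw [← Real.rpow_add hx0]
      congr 1
      ring
    rw [hEdef]
    have h7 : - (2*(x ^ (-α / 2))*((starRingEnd ℂ) (v x) * r x).im)
        ≤ 2*C₃*‖v x‖*x^(-(5:ℝ)/4) := by
      have := mul_le_mul_of_nonneg_left h5 (by linarith : (0:ℝ) ≤ 2 * (x ^ (-α / 2)))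
      calc - (2*(x ^ (-α / 2))*((starRingEnd ℂ) (v x) * r x).im)
          = 2 * (x ^ (-α / 2)) * (-((starRingEnd ℂ) (v x) * r x).im) := by ring
        _ ≤ 2 * (x ^ (-α / 2)) * (‖v x‖ * (C₃ * x ^ (-(5:ℝ)/4 + α/2))) := this
        _ = 2*C₃*‖v x‖*((x ^ (-α / 2)) * x ^ (-(5:ℝ)/4 + α/2)) := by ring
        _ = 2*C₃*‖v x‖*x^(-(5:ℝ)/4) := by rw [h6]
    linarith
  -- the rescaled quantities
  set u : ℝ → ℝ := fun t => t^(β/2) * ‖v t‖ with hudef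
  clear_value u
  set ψ : ℝ → ℝ := fun t => t^β * ‖v t‖^2 with hψdef
  clear_value ψ
  have hψu : ∀ x : ℝ, 0 < x → ψ x = u x ^ 2 := by
    intro x hx0
    have h1 : (x^(β/2))^2 = x^β := by
      rw [← Real.rpow_natCast (x ^ (β/2)) 2, ← Real.rpow_mul hx0.le]
      norm_num
    rw [hψdef, hudef]
    simp only
    rw [mul_pow, h1]
  set f' : ℝ → ℝ := fun t => β * t^(β-1) * ‖v t‖^2 + t^β * E t with hf'def
  clear_value f'
  have hψderiv : ∀ x ∈ Ici (1:ℝ), HasDerivWithinAt ψ (f' x) (Ici 1) x := by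
    intro x hx
    have hx0 : (0:ℝ) < x := lt_of_lt_of_le one_pos hx
    have h1 : HasDerivWithinAt (fun t : ℝ => t^β) (β * x^(β-1)) (Ici 1) x :=
      (Real.hasDerivAt_rpow_const (Or.inl hx0.ne')).hasDerivWithinAt
    have h2 := h1.mul (hyderiv x hx)
    simp only [hψdef, hf'def]
    convert h2 using 1
    try ring
    all_goals rfl
  -- choose T
  have htend : Tendsto (fun x : ℝ => x ^ (1/α - 3/4)) atTop (nhds 0) := by
    have h1 := tendsto_rpow_neg_atTop (y := 3/4 - 1/α) (by linarith)
    simpa [neg_sub] using h1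
  have htend2 : Tendsto (fun x : ℝ => 2*C₃*x ^ (1/α - 3/4)) atTop (nhds 0) := by
    simpa using htend.const_mul (2*C₃)
  have hev : ∀ᶠ x : ℝ in atTop, 2*C₃*x ^ (1/α - 3/4) < c*M/2 ∧ 1 ≤ x :=
    (htend2.eventually_lt_const (by positivity)).and (eventually_ge_atTop 1)
  rw [eventually_atTop] at hev
  obtain ⟨T, hT⟩ := hev
  have hT1 : (1:ℝ) ≤ T := (hT T le_rfl).2
  have hT0 : (0:ℝ) < T := lt_of_lt_of_le one_pos hT1
  -- key differential inequality
  have hkey : ∀ x : ℝ, T ≤ x → M^2 ≤ ψ x → f' x ≤ (-(c/2) * ψ x) / x := by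
    intro x hxT hψM
    have hx1 : (1:ℝ) ≤ x := le_trans hT1 hxT
    have hx0 : (0:ℝ) < x := lt_of_lt_of_le one_pos hx1
    have hu0 : 0 ≤ u x := by
      rw [hudef]
      exact mul_nonneg (Real.rpow_nonneg hx0.le _) (norm_nonneg _)
    have hψux := hψu x hx0
    have huM : M ≤ u x := by
      have h1 : M^2 ≤ u x ^ 2 := by rw [← hψux]; exact hψM
      nlinarith [h1, hu0, hM0]
    have hh0 : (0:ℝ) < ‖v x‖ := by
      rcases lt_or_eq_of_le (norm_nonneg (v x)) with h | h
      · exact h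
      · exfalso
        have h0 : u x = 0 := by rw [hudef]; simp [← h]
        rw [h0] at huM
        linarith
    have hupow : ∀ p : ℝ, (u x) ^ p = x ^ (β/2*p) * ‖v x‖ ^ p := by
      intro p
      rw [hudef]
      simp only
      rw [Real.mul_rpow (Real.rpow_nonneg hx0.le _) (norm_nonneg _),
        ← Real.rpow_mul hx0.le]
    have hh2 : ‖v x‖ ^ ((2:ℝ)) = ‖v x‖^2 := by
      rw [show ((2:ℝ)) = ((2:ℕ):ℝ) by norm_num, Real.rpow_natCast]
    -- identity pieces
    have e1 : x^(β-1) * ‖v x‖^2 = (u x)^2 / x := by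
      rw [← hψux, hψdef]
      simp only
      rw [Real.rpow_sub hx0, Real.rpow_one]
      ring
    have e2 : x^β * ((x ^ (-α / 2)) * (‖v x‖^α * ‖v x‖^2)) = (u x)^(α+2) / x := by
      rw [hupow (α+2), Real.rpow_add hh0, hh2,
        show β/2*(α+2) = β + (-α/2) + 1 by rw [hβdef]; field_simp; ring,
        Real.rpow_add hx0, Real.rpow_add hx0, Real.rpow_one,
        show (-α/2 : ℝ) = -α / 2 by ring]
      field_simp
    have e3 : x^β * (‖v x‖ * x^(-(5:ℝ)/4)) = (u x) * x^(1/α - 3/4) / x := by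
      have h1 : (u x) * x^(1/α - 3/4) / x = x^(β/2) * x^(1/α - 3/4) / x^(1:ℝ) * ‖v x‖ := by
        rw [hudef, Real.rpow_one]
        ring
      rw [h1, ← Real.rpow_add hx0, ← Real.rpow_sub hx0,
        show β/2 + (1/α - 3/4) - 1 = β + (-(5:ℝ)/4) by rw [hβdef]; field_simp; ring,
        Real.rpow_add hx0]
      field_simp
    -- assemble
    have step1 : f' x ≤ β * x^(β-1) * ‖v x‖^2
        + x^β * (-2*lam2*(x ^ (-α / 2))*(‖v x‖^α)*‖v x‖^2 + 2*C₃*‖v x‖*x^(-(5:ℝ)/4)) := by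
      rw [hf'def]
      simp only
      have := mul_le_mul_of_nonneg_left (hEbound x hx1) (Real.rpow_nonneg hx0.le β)
      linarith
    have step2 : β * x^(β-1) * ‖v x‖^2
        + x^β * (-2*lam2*(x ^ (-α / 2))*(‖v x‖^α)*‖v x‖^2 + 2*C₃*‖v x‖*x^(-(5:ℝ)/4))
        = (β * (u x)^2 - 2*lam2*(u x)^(α+2) + 2*C₃*(u x)*x^(1/α - 3/4)) / x := by
      linear_combination β * e1 - 2*lam2 * e2 + 2*C₃ * e3
    have hua : M^α ≤ (u x)^α := Real.rpow_le_rpow hM0.le huM hα0.le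
    have hux2 : (u x) ^ ((2:ℝ)) = (u x)^2 := by
      rw [show ((2:ℝ)) = ((2:ℕ):ℝ) by norm_num, Real.rpow_natCast]
    have hua2 : (u x)^(α+2) = (u x)^α * (u x)^2 := by
      rw [Real.rpow_add (lt_of_lt_of_le hM0 huM), hux2]
    have hn2 : 2*C₃*x ^ (1/α - 3/4) < c*M/2 := (hT x hxT).1
    have step3 : β * (u x)^2 - 2*lam2*(u x)^(α+2) + 2*C₃*(u x)*x^(1/α - 3/4)
        ≤ -(c/2) * ψ x := by
      rw [hψux]
      have hx3 : 0 ≤ x ^ (1/α - 3/4) := Real.rpow_nonneg hx0.le _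
      have k1 : 2*lam2*(M^α * (u x)^2) ≤ 2*lam2*(u x)^(α+2) := by
        rw [hua2]
        have h9 := mul_le_mul_of_nonneg_right hua (sq_nonneg (u x))
        exact mul_le_mul_of_nonneg_left h9 (by positivity)
      have k2 : 2*C₃*(u x)*x^(1/α - 3/4) ≤ (c*M/2) * (u x) := by
        have := mul_le_mul_of_nonneg_right hn2.le hu0
        calc 2*C₃*(u x)*x^(1/α - 3/4) = (2*C₃*x ^ (1/α - 3/4)) * u x := by ring
          _ ≤ (c*M/2) * (u x) := this
      have k3 : (c*M/2) * (u x) ≤ (c/2) * (u x)^2 := by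
        have h9 := mul_le_mul_of_nonneg_left (mul_le_mul_of_nonneg_right huM hu0)
          (le_of_lt (by linarith : (0:ℝ) < c/2))
        calc (c*M/2) * (u x) = (c/2) * (M * u x) := by ring
          _ ≤ (c/2) * (u x * u x) := h9
          _ = (c/2) * (u x)^2 := by ring
      have hβc : β = 2*lam2*M^α - c := by rw [hcdef]; ring
      have hb2 : β * (u x)^2 = 2*lam2*(M^α*(u x)^2) - c*(u x)^2 := by rw [hβc]; ring
      linarith [k1, k2, k3, hb2]
    calc f' x ≤ (β * (u x)^2 - 2*lam2*(u x)^(α+2) + 2*C₃*(u x)*x^(1/α - 3/4)) / x := by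
          rw [← step2]; exact step1
      _ ≤ (-(c/2) * ψ x) / x := by
          rw [div_le_div_iff_of_pos_right hx0]
          exact step3
  -- the barrier function
  set A := ψ T + 1 with hAdef
  clear_value A
  have hψT0 : 0 ≤ ψ T := by
    rw [hψdef]
    positivity
  have hA0 : 0 < A := by rw [hAdef]; linarith
  set γ := c/4 with hγdef
  clear_value γ
  have hγ0 : 0 < γ := by rw [hγdef]; linarith
  set Bf : ℝ → ℝ := fun x => M^2 + A*T^γ*x^(-γ) with hBfdef
  clear_value Bf
  set Bf' : ℝ → ℝ := fun x => A*T^γ*(-γ * x^(-γ-1)) with hBf'def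
  clear_value Bf'
  have hbar : ∀ b : ℝ, T ≤ b → ψ b ≤ Bf b := by
    intro b hb
    have hmain : ∀ x ∈ Icc T b, ψ x ≤ Bf x := by
      refine image_le_of_deriv_right_lt_deriv_boundary' (f' := f') (B' := Bf')
        ?_ ?_ ?_ ?_ ?_ ?_
      · intro x hx
        exact ((hψderiv x (le_trans hT1 hx.1)).continuousWithinAt).mono
          (fun y hy => le_trans hT1 hy.1)
      · intro x hx
        exact (hψderiv x (le_trans hT1 hx.1)).mono (Ici_subset_Ici.2 (le_trans hT1 hx.1))
      · -- ψ T ≤ Bf T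
        rw [hBfdef]
        simp only
        rw [mul_assoc, ← Real.rpow_add hT0, add_neg_cancel, Real.rpow_zero, mul_one, hAdef]
        nlinarith [sq_nonneg M]
      · intro x hx
        have hx0 : (0:ℝ) < x := lt_of_lt_of_le hT0 hx.1
        rw [hBfdef]
        exact (continuousWithinAt_const.add (continuousWithinAt_const.mul
          (Real.continuousAt_rpow_const x (-γ) (Or.inl hx0.ne')).continuousWithinAt))
      · intro x hx
        have hx0 : (0:ℝ) < x := lt_of_lt_of_le hT0 hx.1
        rw [hBfdef, hBf'def]
        exact (((Real.hasDerivAt_rpow_const (Or.inl hx0.ne')).const_mul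
          (A*T^γ)).const_add (M^2)).hasDerivWithinAt
      · -- the strict inequality at contact points
        intro x hx hψB
        have hxT : T ≤ x := hx.1
        have hx0 : (0:ℝ) < x := lt_of_lt_of_le hT0 hxT
        have hq0 : 0 < A*T^γ*x^(-γ) := by positivity
        have hψM : M^2 ≤ ψ x := by
          rw [hψB, hBfdef]
          simp only
          linarith
        have h1 := hkey x hxT hψM
        have hBf'eq : Bf' x = (-γ * (A*T^γ*x^(-γ))) / x := by
          rw [hBf'def]
          simp only
          rw [show -γ-1 = -γ + -1 by ring, Real.rpow_add hx0, Real.rpow_neg_one,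
            div_eq_mul_inv]
          ring
        have h2 : (-(c/2) * ψ x) / x < Bf' x := by
          rw [hBf'eq, div_lt_div_iff₀ hx0 hx0, hψB, hBfdef]
          simp only
          have hcγ : c = 4*γ := by rw [hγdef]; ring
          nlinarith [hcγ, mul_pos (mul_pos hγ0 hx0) hq0,
            mul_nonneg (mul_nonneg hγ0.le hx0.le) (sq_nonneg M)]
        exact lt_of_le_of_lt h1 h2
    exact hmain b ⟨hb, le_rfl⟩
  -- conclusion
  have htend3 : Tendsto (fun t : ℝ => A*T^γ*t^(-γ)) atTop (nhds 0) := by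
    simpa using (tendsto_rpow_neg_atTop hγ0).const_mul (A*T^γ)
  have hlt : 0 < (K+ε)^2 - M^2 := by nlinarith
  filter_upwards [htend3.eventually_lt_const hlt, eventually_ge_atTop T,
    eventually_ge_atTop (1:ℝ)] with t h1 h2 h3
  have ht0 : (0:ℝ) < t := lt_of_lt_of_le one_pos h3
  have hψt : ψ t ≤ (K+ε)^2 := by
    have := hbar t h2
    rw [hBfdef] at this
    simp only at this
    linarith
  have hgoal_eq : t ^ (1/α - 1/2) * ‖v t‖ = u t := by
    rw [hudef]
    simp only
    congr 2
    rw [hβdef]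
    ring
  have hu0 : 0 ≤ u t := by
    rw [hudef]
    exact mul_nonneg (Real.rpow_nonneg ht0.le _) (norm_nonneg _)
  have hut : u t ^ 2 ≤ (K+ε)^2 := by rw [← hψu t ht0]; exact hψt
  rw [hgoal_eq]
  nlinarith [hK0, hε]

end
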